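/- Let α, β > -1 with α+β ≠ -1, let p < q with p, q ∈ E(α,β), and s > 0. Then 𝓛^{q,s}_{α,β}(-π,π) ⊆ 𝓛^{p,s}_{α,β}(-π,π) continuously, and the inclusion is proper: there exists f ∈ 𝓛^{p,s}_{α,β}(-π,π) \ 𝓛^{q,s}_{α,β}(-π,π). -/

import Mathlib

open MeasureTheory Set Real
open scoped ENNReal NNReal

/-- The upper endpoint `p(α,β)` of the interval `E(α,β)`. -/
noncomputable def pMaxJ (α β : ℝ) : ℝ≥0∞ :=
  if -(1 / 2 : ℝ) ≤ α ∧ -(1 / 2 : ℝ) ≤ β then ⊤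
  else ENNReal.ofReal (-1 / min (α + 1 / 2) (β + 1 / 2))

/-- The lower endpoint `p'(α,β)` (conjugate exponent of `p(α,β)`). -/
noncomputable def pMinJ (α β : ℝ) : ℝ :=
  if -(1 / 2 : ℝ) ≤ α ∧ -(1 / 2 : ℝ) ≤ β then 1
  else (pMaxJ α β).toReal / ((pMaxJ α β).toReal - 1)

/-- `p ∈ E(α,β) = (p'(α,β), p(α,β))`. -/
def memEJ (α β p : ℝ) : Prop := pMinJ α β < p ∧ ENNReal.ofReal p < pMaxJ α β

lemma one_le_pMinJ (α β : ℝ) (hα : -1 < α) (hβ : -1 < β) : 1 ≤ pMinJ α β := by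
  unfold pMinJ pMaxJ
  split_ifs with h
  · exact le_rfl
  · have hm0 : min (α + 1 / 2) (β + 1 / 2) < 0 := by
      rcases not_and_or.mp h with h' | h' <;> push_neg at h'
      · exact lt_of_le_of_lt (min_le_left _ _) (by linarith)
      · exact lt_of_le_of_lt (min_le_right _ _) (by linarith)
    have hm1 : -(1 / 2 : ℝ) < min (α + 1 / 2) (β + 1 / 2) :=
      lt_min (by linarith) (by linarith)
    set m := min (α + 1 / 2) (β + 1 / 2) with hm
    have hP : (0 : ℝ) < -1 / m := div_pos_of_neg_of_neg (by norm_num) hm0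
    have h2 : (2 : ℝ) < -1 / m := by
      rw [lt_div_iff_of_neg hm0]; linarith
    rw [ENNReal.toReal_ofReal hP.le, le_div_iff₀ (by linarith)]
    linarith

/-- Comparison of `L^a` and `L^b` "norms" (as `lintegral`s of `rpow`s) for an arbitrary,
not necessarily measurable, `ℝ≥0∞`-valued function. -/
lemma aux_lintegral_rpow_le {X : Type*} [MeasurableSpace X] (μ : Measure X)
    (f : X → ℝ≥0∞) {a b : ℝ} (ha : 0 < a) (hab : a < b) :
    (∫⁻ x, f x ^ a ∂μ) ^ (1 / a) ≤
      (∫⁻ x, f x ^ b ∂μ) ^ (1 / b) * μ Set.univ ^ (1 / a - 1 / b) := by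
  have hb : 0 < b := ha.trans hab
  set R : ℝ≥0∞ := (∫⁻ x, f x ^ b ∂μ) ^ (1 / b) * μ Set.univ ^ (1 / a - 1 / b) with hR
  suffices h : (∫⁻ x, f x ^ a ∂μ) ≤ R ^ a by
    calc (∫⁻ x, f x ^ a ∂μ) ^ (1 / a) ≤ (R ^ a) ^ (1 / a) :=
          ENNReal.rpow_le_rpow h (by positivity)
      _ = R := by rw [← ENNReal.rpow_mul, mul_one_div_cancel ha.ne', ENNReal.rpow_one]
  rw [lintegral_def]
  refine iSup₂_le fun φ hφ => ?_
  have hψm : Measurable fun x => (φ x : ℝ≥0∞) ^ (1 / a) :=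
    ENNReal.continuous_rpow_const.measurable.comp φ.measurable
  have hψle : ∀ x, (φ x : ℝ≥0∞) ^ (1 / a) ≤ f x := fun x => by
    calc (φ x : ℝ≥0∞) ^ (1 / a) ≤ (f x ^ a) ^ (1 / a) :=
          ENNReal.rpow_le_rpow (hφ x) (by positivity)
      _ = f x := by rw [← ENNReal.rpow_mul, mul_one_div_cancel ha.ne', ENNReal.rpow_one]
  have hba : 0 < b - a := by linarith
  have hpqr : 1 / a = 1 / b + 1 / (a * b / (b - a)) := by
    field_simp
    ring
  have key := ENNReal.lintegral_Lp_mul_le_Lq_mul_Lr ha hab hpqr μ hψm.aemeasurable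
    (aemeasurable_const (b := (1 : ℝ≥0∞)))
  have h1r : 1 / (a * b / (b - a)) = 1 / a - 1 / b := by
    field_simp
  simp only [Pi.mul_apply, mul_one, ENNReal.one_rpow, lintegral_one, h1r] at key
  have hLHS : (∫⁻ y, (φ y ^ (1 / a)) ^ a ∂μ) = ∫⁻ y, (φ y : ℝ≥0∞) ∂μ :=
    lintegral_congr fun y => by
      rw [← ENNReal.rpow_mul, one_div_mul_cancel ha.ne', ENNReal.rpow_one]
  rw [hLHS] at key
  have step1 : (∫⁻ x, (φ x : ℝ≥0∞) ∂μ) ^ (1 / a) ≤ R := by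
    refine key.trans ?_
    rw [hR]
    refine mul_le_mul_left (ENNReal.rpow_le_rpow ?_ (by positivity)) _
    exact lintegral_mono fun x => ENNReal.rpow_le_rpow (hψle x) hb.le
  have h2 := ENNReal.rpow_le_rpow step1 ha.le
  rw [← ENNReal.rpow_mul, one_div_mul_cancel ha.ne', ENNReal.rpow_one] at h2
  exact le_trans (le_of_eq (φ.lintegral_eq_lintegral μ).symm) h2

/-- Let `α, β > -1` with `α+β ≠ -1`, `p < q` with `p, q ∈ E(α,β)`, `s > 0`,
and let `T = 𝕃_{α,β}^{-s/2}` (injective modulo null sets on `L^p(-π,π)`).  Then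
`𝓛^{q,s}_{α,β}(-π,π) = T(L^q) ⊆ T(L^p) = 𝓛^{p,s}_{α,β}(-π,π)` continuously (the potential
norms being `‖Tg‖ = ‖g‖_{L^r}`), and the inclusion is proper: some `f ∈ 𝓛^{p,s}` lies in
no `T(L^q)`-representation. -/
theorem stmt14 (α β p q s : ℝ) (hα : -1 < α) (hβ : -1 < β) (hne : α + β ≠ -1)
    (hpq : p < q) (hpE : memEJ α β p) (hqE : memEJ α β q) (hs : 0 < s)
    (T : (ℝ → ℂ) → (ℝ → ℂ))
    (hinj : ∀ g g', MemLp g (ENNReal.ofReal p) (volume.restrict (Ioo (-π) π)) →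
      MemLp g' (ENNReal.ofReal p) (volume.restrict (Ioo (-π) π)) →
      T g =ᵐ[volume.restrict (Ioo (-π) π)] T g' →
      g =ᵐ[volume.restrict (Ioo (-π) π)] g') :
    (∀ f : ℝ → ℂ,
      (∃ g, MemLp g (ENNReal.ofReal q) (volume.restrict (Ioo (-π) π)) ∧
        f =ᵐ[volume.restrict (Ioo (-π) π)] T g) →
      (∃ g, MemLp g (ENNReal.ofReal p) (volume.restrict (Ioo (-π) π)) ∧
        f =ᵐ[volume.restrict (Ioo (-π) π)] T g))
    ∧ (∃ C : ℝ≥0∞, C ≠ ⊤ ∧ ∀ g : ℝ → ℂ,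
        eLpNorm g (ENNReal.ofReal p) (volume.restrict (Ioo (-π) π))
          ≤ C * eLpNorm g (ENNReal.ofReal q) (volume.restrict (Ioo (-π) π)))
    ∧ (∃ f : ℝ → ℂ,
        (∃ g, MemLp g (ENNReal.ofReal p) (volume.restrict (Ioo (-π) π)) ∧
          f =ᵐ[volume.restrict (Ioo (-π) π)] T g)
        ∧ ¬(∃ g, MemLp g (ENNReal.ofReal q) (volume.restrict (Ioo (-π) π)) ∧
          f =ᵐ[volume.restrict (Ioo (-π) π)] T g)) := by
  have hπ : (0 : ℝ) < π := pi_pos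
  have hp1 : 1 < p := lt_of_le_of_lt (one_le_pMinJ α β hα hβ) hpE.1
  have hq1 : 1 < q := hp1.trans hpq
  have hp0 : 0 < p := by linarith
  have hq0 : 0 < q := by linarith
  haveI : IsFiniteMeasure (volume.restrict (Ioo (-π) π)) :=
    ⟨by rw [Measure.restrict_apply_univ, Real.volume_Ioo]; exact ENNReal.ofReal_lt_top⟩
  have hle : ENNReal.ofReal p ≤ ENNReal.ofReal q := ENNReal.ofReal_le_ofReal hpq.le
  have h0p : ENNReal.ofReal p ≠ 0 := (ENNReal.ofReal_pos.mpr hp0).ne'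
  have h0q : ENNReal.ofReal q ≠ 0 := (ENNReal.ofReal_pos.mpr hq0).ne'
  refine ⟨?_, ?_, ?_⟩
  · rintro f ⟨g, hg, hfg⟩
    exact ⟨g, hg.mono_exponent hle, hfg⟩
  · refine ⟨(volume (Ioo (-π) π)) ^ (1 / p - 1 / q), ?_, ?_⟩
    · refine ENNReal.rpow_ne_top_of_nonneg
        (sub_nonneg.mpr (one_div_le_one_div_of_le hp0 hpq.le)) ?_
      rw [Real.volume_Ioo]; exact ENNReal.ofReal_ne_top
    · intro g
      rw [eLpNorm_eq_lintegral_rpow_enorm_toReal h0p ENNReal.ofReal_ne_top,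
        eLpNorm_eq_lintegral_rpow_enorm_toReal h0q ENNReal.ofReal_ne_top,
        ENNReal.toReal_ofReal hp0.le, ENNReal.toReal_ofReal hq0.le]
      have h := aux_lintegral_rpow_le (volume.restrict (Ioo (-π) π))
        (fun x => (‖g x‖₊ : ℝ≥0∞)) hp0 hpq
      rw [Measure.restrict_apply_univ] at h
      exact h.trans_eq (mul_comm _ _)
  · set g0 : ℝ → ℂ := fun x => ((x + π) ^ (-1 / q) : ℝ) with hg0
    have hmeas : Measurable g0 := by
      apply Complex.measurable_ofReal.comp
      measurability
    have habs : ∀ x ∈ Ioo (-π) π, ∀ r : ℝ, ‖g0 x‖ ^ r = (x + π) ^ (-1 / q * r) := by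
      intro x hx r
      have hx0 : 0 < x + π := by linarith [hx.1]
      have h1 : ‖g0 x‖ = (x + π) ^ (-1 / q) := by
        simp only [hg0, Complex.norm_real, Real.norm_eq_abs]
        exact abs_of_pos (rpow_pos_of_pos hx0 _)
      rw [h1, ← Real.rpow_mul hx0.le]
    have hInt : IntegrableOn (fun x => ‖g0 x‖ ^ p) (Ioo (-π) π) := by
      have hexp : (-1 : ℝ) < -1 / q * p := by
        have h1 : p / q < 1 := (div_lt_one hq0).mpr hpq
        have h2 : -1 / q * p = -(p / q) := by ring
        rw [h2]; linarith
      have hbase : IntervalIntegrable (fun x : ℝ => x ^ (-1 / q * p)) volume 0 (2 * π) :=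
        intervalIntegral.intervalIntegrable_rpow' hexp
      have h2 := hbase.comp_add_right π
      rw [show (0 : ℝ) - π = -π by ring, show 2 * π - π = π by ring] at h2
      have h3 := (intervalIntegrable_iff_integrableOn_Ioo_of_le (by linarith)).mp h2
      refine h3.congr ?_
      filter_upwards [ae_restrict_mem measurableSet_Ioo] with x hx
      exact (habs x hx p).symm
    have hMemp : MemLp g0 (ENNReal.ofReal p) (volume.restrict (Ioo (-π) π)) := by
      refine ⟨hmeas.aestronglyMeasurable, ?_⟩
      rw [eLpNorm_eq_lintegral_rpow_enorm_toReal h0p ENNReal.ofReal_ne_top,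
        ENNReal.toReal_ofReal hp0.le]
      refine ENNReal.rpow_lt_top_of_nonneg (by positivity) ?_
      have heq : ∀ x, ‖g0 x‖ₑ ^ p = ENNReal.ofReal (‖g0 x‖ ^ p) := fun x => by
        rw [← ofReal_norm_eq_enorm, ENNReal.ofReal_rpow_of_nonneg (norm_nonneg _) hp0.le]
      rw [lintegral_congr heq]
      exact hInt.lintegral_lt_top.ne
    have hNot : ¬ MemLp g0 (ENNReal.ofReal q) (volume.restrict (Ioo (-π) π)) := by
      intro hmem
      have hInt2 : Integrable (fun x => ‖g0 x‖ ^ q) (volume.restrict (Ioo (-π) π)) := by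
        have h := hmem.integrable_norm_rpow h0q ENNReal.ofReal_ne_top
        rwa [ENNReal.toReal_ofReal hq0.le] at h
      have hInt3 : IntegrableOn (fun x : ℝ => (x + π) ^ (-1 : ℝ)) (Ioo (-π) π) := by
        refine hInt2.congr ?_
        filter_upwards [ae_restrict_mem measurableSet_Ioo] with x hx
        rw [habs x hx q]
        congr 1
        field_simp
      have h4 : IntervalIntegrable (fun x : ℝ => (x + π) ^ (-1 : ℝ)) volume (-π) π :=
        (intervalIntegrable_iff_integrableOn_Ioo_of_le (by linarith)).mpr hInt3
      have h5 := h4.comp_sub_right π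
      rw [show -π + π = (0 : ℝ) by ring, show π + π = 2 * π by ring] at h5
      have h6 : IntegrableOn (fun x : ℝ => x ^ (-1 : ℝ)) (Ioo 0 (2 * π)) := by
        have h7 := (intervalIntegrable_iff_integrableOn_Ioo_of_le (by linarith)).mp h5
        refine h7.congr ?_
        filter_upwards with x
        simp
      have := (intervalIntegral.integrableOn_Ioo_rpow_iff (by linarith)).mp h6
      linarith
    refine ⟨T g0, ⟨g0, hMemp, Filter.EventuallyEq.rfl⟩, ?_⟩
    rintro ⟨g', hg'q, hfe⟩
    have hg'p := hg'q.mono_exponent hle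
    have heq := hinj g0 g' hMemp hg'p hfe
    exact hNot (MemLp.ae_eq heq.symm hg'q)
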